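/- The notion of Ag-bisimulation for iCGS does not enjoy the Hennessy–Milner property under the objective semantics: there exist finite single-agent iCGS G5 and G6 and states q0 ∈ G5, q0' ∈ G6 that satisfy exactly the same Ag-formulas of ATL* under the objective imperfect-information memoryless semantics, but no Ag-bisimulation relates q0 and q0'. -/

import Mathlib

/-- An imperfect-information concurrent game structure (iCGS), given as raw data;
the defining axioms are collected in `iCGS.Valid`. -/
structure iCGS (Ag AP S Act : Type) where
  init : S
  indist : Ag → S → S → Prop
  protocol : Ag → S → Set Act
  trans : S → (Ag → Act) → S → Prop
  label : S → Set AP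

namespace iCGS

variable {Ag AP S S' Act Act' : Type}

/-- The axioms of an iCGS. -/
def Valid (G : iCGS Ag AP S Act) : Prop :=
  (∀ i, Equivalence (G.indist i)) ∧
  (∀ i s, (G.protocol i s).Nonempty) ∧
  (∀ i s s', G.indist i s s' → G.protocol i s = G.protocol i s') ∧
  (∀ s a, (∃ s', G.trans s a s') ↔ ∀ i, a i ∈ G.protocol i s)

/-- Common-knowledge reachability for coalition `A`:
reflexive-transitive closure of the union of the `∼ᵢ`, `i ∈ A`. -/
def ck (G : iCGS Ag AP S Act) (A : Set Ag) : S → S → Prop :=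
  Relation.ReflTransGen (fun s s' => ∃ i ∈ A, G.indist i s s')

/-- Common-knowledge neighbourhood `C_A(q)`. -/
def CKN (G : iCGS Ag AP S Act) (A : Set Ag) (q : S) : Set S := {r | G.ck A q r}

/-- "Everybody knows" neighbourhood `E_A(q)`. -/
def EKN (G : iCGS Ag AP S Act) (A : Set Ag) (q : S) : Set S :=
  {r | ∃ i ∈ A, G.indist i q r}

/-- `σ` is a partial uniform strategy for coalition `A` with domain `Q`. -/
def IsPStrat (G : iCGS Ag AP S Act) (A : Set Ag) (Q : Set S) (σ : Ag → S → Act) : Prop :=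
  (∀ i ∈ A, ∀ s ∈ Q, σ i s ∈ G.protocol i s) ∧
  (∀ i ∈ A, ∀ s ∈ Q, ∀ t ∈ Q, G.indist i s t → σ i s = σ i t)

/-- `σ` is a (total) uniform memoryless strategy for coalition `A`. -/
def IsStrat (G : iCGS Ag AP S Act) (A : Set Ag) (σ : Ag → S → Act) : Prop :=
  G.IsPStrat A Set.univ σ

/-- Successors of `s` under joint actions compatible with `σ` on coalition `A`. -/
def succ (G : iCGS Ag AP S Act) (A : Set Ag) (σ : Ag → S → Act) (s : S) : Set S :=
  {t | ∃ a : Ag → Act, (∀ i ∈ A, a i = σ i s) ∧ G.trans s a t}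

/-- Objective outcome set of strategy `σ` at `q` (runs as infinite state sequences). -/
def OutObj (G : iCGS Ag AP S Act) (A : Set Ag) (σ : Ag → S → Act) (q : S) :
    Set (ℕ → S) :=
  {lam | lam 0 = q ∧ ∀ j, lam (j + 1) ∈ G.succ A σ (lam j)}

/-- Subjective outcome set: union of objective outcomes over states indistinguishable
from `q` for some member of the coalition. -/
def OutSubj (G : iCGS Ag AP S Act) (A : Set Ag) (σ : Ag → S → Act) (q : S) :
    Set (ℕ → S) :=
  {lam | ∃ i ∈ A, ∃ r, G.indist i q r ∧ lam ∈ G.OutObj A σ r}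

/-- Outcome set: subjective (`x = true`) or objective (`x = false`).
(For a nonempty coalition the subjective case coincides with the union of
objective outcomes over indistinguishable states, by reflexivity; for the
empty coalition it degenerates to the objective case.) -/
def Out (G : iCGS Ag AP S Act) (x : Bool) (A : Set Ag) (σ : Ag → S → Act) (q : S) :
    Set (ℕ → S) :=
  if x then G.OutObj A σ q ∪ G.OutSubj A σ q else G.OutObj A σ q

/-- `R` is a simulation for coalition `A` from `G` to `G'` (Def. of simulation):
existence of a strategy simulator over common-knowledge neighbourhoods with
(a) atom agreement, (b) epistemic back-condition, (c) strategy transfer, and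
(2) injectivity modulo common-knowledge neighbourhoods. -/
def IsSimulation (G : iCGS Ag AP S Act) (G' : iCGS Ag AP S' Act') (A : Set Ag)
    (R : S → S' → Prop) : Prop :=
  (∃ ST : Set S → Set S' → (Ag → S → Act) → (Ag → S' → Act'),
    ∀ q q', R q q' →
      (∀ σ, G.IsPStrat A (G.CKN A q) σ →
        G'.IsPStrat A (G'.CKN A q') (ST (G.CKN A q) (G'.CKN A q') σ)) ∧
      (∀ r ∈ G.CKN A q, ∀ r' ∈ G'.CKN A q', R r r' →
        ∀ σ, G.IsPStrat A (G.CKN A q) σ →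
          ∀ s' ∈ G'.succ A (ST (G.CKN A q) (G'.CKN A q') σ) r',
            ∃ s ∈ G.succ A σ r, R s s')) ∧
  (∀ q q', R q q' → G.label q = G'.label q') ∧
  (∀ q q', R q q' → ∀ i ∈ A, ∀ r', G'.indist i q' r' →
    ∃ r, G.indist i q r ∧ R r r') ∧
  (∀ q₁ q₂ q', R q₁ q' → R q₂ q' → G.CKN A q₁ = G.CKN A q₂)

/-- `R` is a bisimulation for `A` iff both `R` and its converse are `A`-simulations. -/
def IsBisimulation (G : iCGS Ag AP S Act) (G' : iCGS Ag AP S' Act') (A : Set Ag)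
    (R : S → S' → Prop) : Prop :=
  G.IsSimulation G' A R ∧ G'.IsSimulation G A (fun q' q => R q q')

end iCGS
mutual
/-- State formulas of ATL*. -/
inductive SF (AP Ag : Type) : Type where
  | atom : AP → SF AP Ag
  | neg : SF AP Ag → SF AP Ag
  | imp : SF AP Ag → SF AP Ag → SF AP Ag
  | coal : Set Ag → PF AP Ag → SF AP Ag
/-- Path formulas of ATL*. -/
inductive PF (AP Ag : Type) : Type where
  | of : SF AP Ag → PF AP Ag
  | neg : PF AP Ag → PF AP Ag
  | imp : PF AP Ag → PF AP Ag → PF AP Ag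
  | next : PF AP Ag → PF AP Ag
  | untl : PF AP Ag → PF AP Ag → PF AP Ag
end

variable {Ag AP S Act : Type}

mutual
/-- Satisfaction of ATL* state formulas; `x = true` is the subjective,
`x = false` the objective imperfect-information memoryless semantics. -/
def SSat (G : iCGS Ag AP S Act) (x : Bool) : S → SF AP Ag → Prop
  | s, .atom p => p ∈ G.label s
  | s, .neg φ => ¬ SSat G x s φ
  | s, .imp φ ψ => SSat G x s φ → SSat G x s ψ
  | s, .coal A ψ =>
      ∃ σ, G.IsStrat A σ ∧ ∀ lam ∈ G.Out x A σ s, PSat G x lam ψ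
/-- Satisfaction of ATL* path formulas on runs. -/
def PSat (G : iCGS Ag AP S Act) (x : Bool) : (ℕ → S) → PF AP Ag → Prop
  | lam, .of φ => SSat G x (lam 0) φ
  | lam, .neg ψ => ¬ PSat G x lam ψ
  | lam, .imp ψ χ => PSat G x lam ψ → PSat G x lam χ
  | lam, .next ψ => PSat G x (fun n => lam (n + 1)) ψ
  | lam, .untl ψ χ => ∃ j, PSat G x (fun n => lam (n + j)) χ ∧
      ∀ k < j, PSat G x (fun n => lam (n + k)) ψ
end

mutual
/-- `φ` is an `A`-formula: `A` is the only coalition occurring in it. -/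
def SOnly (A : Set Ag) : SF AP Ag → Prop
  | .atom _ => True
  | .neg φ => SOnly A φ
  | .imp φ ψ => SOnly A φ ∧ SOnly A ψ
  | .coal B ψ => B = A ∧ POnly A ψ
def POnly (A : Set Ag) : PF AP Ag → Prop
  | .of φ => SOnly A φ
  | .neg ψ => POnly A ψ
  | .imp ψ χ => POnly A ψ ∧ POnly A χ
  | .next ψ => POnly A ψ
  | .untl ψ χ => POnly A ψ ∧ POnly A χ
end

namespace HM8

inductive S5 : Type | q0 | q1 | q2 | q3
deriving DecidableEq

instance : Fintype S5 :=
  Fintype.ofList [S5.q0, S5.q1, S5.q2, S5.q3] (by intro x; cases x <;> simp)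

inductive S6 : Type | a0 | a2 | a3
deriving DecidableEq

instance : Fintype S6 :=
  Fintype.ofList [S6.a0, S6.a2, S6.a3] (by intro x; cases x <;> simp)

open S5 S6

def c5 : S5 → S6
  | q0 => a0 | q1 => a0 | q2 => a2 | q3 => a3

def gg : S6 → S5
  | a0 => q0 | a2 => q2 | a3 => q3

def step5 : S5 → Bool → S5
  | q0, true => q2 | q0, false => q3
  | q1, true => q3 | q1, false => q2
  | q2, _ => q2 | q3, _ => q3

def step6 : S6 → Bool → S6
  | a0, true => a2 | a0, false => a3
  | a2, _ => a2 | a3, _ => a3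

def G5 : iCGS Unit Unit S5 Bool where
  init := q0
  indist := fun _ s t => c5 s = c5 t
  protocol := fun _ _ => Set.univ
  trans := fun s a t => t = step5 s (a ())
  label := fun s => {_x | s = q2}

def G6 : iCGS Unit Unit S6 Bool where
  init := a0
  indist := fun _ s t => s = t
  protocol := fun _ _ => Set.univ
  trans := fun s a t => t = step6 s (a ())
  label := fun s => {_x | s = a2}

lemma comm1 : ∀ (q : S6) (b : Bool), gg (step6 q b) = step5 (gg q) b := by
  intro q b; cases q <;> cases b <;> rfl

lemma comm2 : ∀ (q : S5), q ≠ q1 → ∀ b : Bool, c5 (step5 q b) = step6 (c5 q) b := by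
  intro q hq b; cases q <;> cases b <;> first | rfl | exact absurd rfl hq

lemma cg : ∀ q : S6, c5 (gg q) = q := by intro q; cases q <;> rfl

lemma gc : ∀ q : S5, q ≠ q1 → gg (c5 q) = q := by
  intro q hq; cases q <;> first | rfl | exact absurd rfl hq

lemma step5_ne : ∀ (q : S5) (b : Bool), step5 q b ≠ q1 := by
  intro q b; cases q <;> cases b <;> simp [step5]

lemma G5_valid : G5.Valid := by
  refine ⟨fun i => ⟨fun s => rfl, fun h => h.symm, fun h h' => h.trans h'⟩,
    fun i s => ⟨true, Set.mem_univ _⟩, fun i s s' _ => rfl, fun s a => ?_⟩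
  simp [G5]

lemma G6_valid : G6.Valid := by
  refine ⟨fun i => ⟨fun s => rfl, fun h => h.symm, fun h h' => h.trans h'⟩,
    fun i s => ⟨true, Set.mem_univ _⟩, fun i s s' h => by cases h; rfl, fun s a => ?_⟩
  simp [G6]

mutual

theorem sEquiv (s : S5) (hs : s ≠ q1) :
    ∀ φ : SF Unit Unit, SSat G5 false s φ ↔ SSat G6 false (c5 s) φ
  | .atom p => by
      simp only [SSat, G5, G6, Set.mem_setOf_eq]
      constructor
      · rintro rfl; rfl
      · intro h; cases s <;> first | rfl | simp_all [c5] | exact absurd rfl hs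
  | .neg φ => by
      have := sEquiv s hs φ
      simp only [SSat]; tauto
  | .imp φ ψ => by
      have h1 := sEquiv s hs φ
      have h2 := sEquiv s hs ψ
      simp only [SSat]; tauto
  | .coal A ψ => by
      simp only [SSat, iCGS.Out, if_neg (by simp : ¬ (false : Bool) = true)]
      constructor
      · rintro ⟨σ, hσ, hout⟩
        refine ⟨fun i q => σ i (gg q), ⟨fun i _ t _ => Set.mem_univ _,
          fun i _ r _ t _ h => by cases h; rfl⟩, ?_⟩
        intro lam6 hlam6
        set lam5 : ℕ → S5 := fun n => gg (lam6 n) with hlam5def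
        have hlam5 : lam5 ∈ G5.OutObj A σ s := by
          constructor
          · show gg (lam6 0) = s
            rw [hlam6.1, gc s hs]
          · intro j
            obtain ⟨a, ha, ht⟩ := hlam6.2 j
            refine ⟨a, fun i hi => ha i hi, ?_⟩
            show gg (lam6 (j+1)) = step5 (gg (lam6 j)) (a ())
            rw [ht]; exact comm1 _ _
        have hne : ∀ j, lam5 j ≠ q1 := by
          intro j; cases h : lam6 j <;> simp [hlam5def, h, gg]
        have hp := (pEquiv lam5 hne ψ).mp (hout lam5 hlam5)
        have : (fun n => c5 (lam5 n)) = lam6 := funext fun n => cg _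
        rwa [this] at hp
      · rintro ⟨σ, hσ, hout⟩
        refine ⟨fun i q => σ i (c5 q), ⟨fun i _ t _ => Set.mem_univ _,
          fun i _ r _ t _ h => by show σ i (c5 r) = σ i (c5 t); rw [h]⟩, ?_⟩
        intro lam5 hlam5
        have hne : ∀ j, lam5 j ≠ q1 := by
          intro j
          cases j with
          | zero => rw [hlam5.1]; exact hs
          | succ k =>
            obtain ⟨a, ha, ht⟩ := hlam5.2 k
            rw [ht]; exact step5_ne _ _
        have hlam6 : (fun n => c5 (lam5 n)) ∈ G6.OutObj A σ (c5 s) := by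
          constructor
          · show c5 (lam5 0) = c5 s
            rw [hlam5.1]
          · intro j
            obtain ⟨a, ha, ht⟩ := hlam5.2 j
            refine ⟨a, fun i hi => ha i hi, ?_⟩
            show c5 (lam5 (j+1)) = step6 (c5 (lam5 j)) (a ())
            rw [ht]; exact comm2 _ (hne j) _
        exact (pEquiv lam5 hne ψ).mpr (hout _ hlam6)

theorem pEquiv (lam : ℕ → S5) (h : ∀ j, lam j ≠ q1) :
    ∀ ψ : PF Unit Unit, PSat G5 false lam ψ ↔ PSat G6 false (fun n => c5 (lam n)) ψ
  | .of φ => by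
      have := sEquiv (lam 0) (h 0) φ
      simpa [PSat] using this
  | .neg ψ => by
      have := pEquiv lam h ψ
      simp only [PSat]; tauto
  | .imp ψ χ => by
      have h1 := pEquiv lam h ψ
      have h2 := pEquiv lam h χ
      simp only [PSat]; tauto
  | .next ψ => by
      have := pEquiv (fun n => lam (n+1)) (fun j => h (j+1)) ψ
      simpa [PSat] using this
  | .untl ψ χ => by
      simp only [PSat]
      constructor
      · rintro ⟨j, hj, hk⟩
        exact ⟨j, (pEquiv (fun n => lam (n+j)) (fun n => h (n+j)) χ).mp hj,
          fun k hkj => (pEquiv (fun n => lam (n+k)) (fun n => h (n+k)) ψ).mp (hk k hkj)⟩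
      · rintro ⟨j, hj, hk⟩
        exact ⟨j, (pEquiv (fun n => lam (n+j)) (fun n => h (n+j)) χ).mpr hj,
          fun k hkj => (pEquiv (fun n => lam (n+k)) (fun n => h (n+k)) ψ).mpr (hk k hkj)⟩

end

lemma ck5_iff (s t : S5) : G5.ck Set.univ s t ↔ c5 s = c5 t := by
  constructor
  · intro h
    induction h with
    | refl => rfl
    | tail _ hst ih =>
      obtain ⟨i, _, hi⟩ := hst
      exact ih.trans hi
  · intro h
    exact Relation.ReflTransGen.single ⟨(), Set.mem_univ _, h⟩

lemma CKN5_eq : G5.CKN Set.univ q0 = G5.CKN Set.univ q1 := by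
  ext r
  simp only [iCGS.CKN, Set.mem_setOf_eq, ck5_iff]
  constructor <;> intro h <;> exact h

lemma no_bisim : ¬ ∃ R, G5.IsBisimulation G6 Set.univ R ∧ R q0 a0 := by
  rintro ⟨R, ⟨⟨⟨ST, hST⟩, hlab, _, _⟩, ⟨_, _, hback, _⟩⟩, hR00⟩
  -- q1 R a0 via the back condition of the converse simulation
  obtain ⟨r', hr', hRq1⟩ := hback a0 q0 hR00 () (Set.mem_univ _) q1 (by rfl)
  -- hr' : G6.indist () a0 r', so r' = a0
  have hr'eq : r' = a0 := hr'.symm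
  subst hr'eq
  -- constant strategy L (true)
  set σ : Unit → S5 → Bool := fun _ _ => true with hσdef
  have hσ : G5.IsPStrat Set.univ (G5.CKN Set.univ q0) σ :=
    ⟨fun i _ s _ => Set.mem_univ _, fun i _ s _ t _ _ => rfl⟩
  set τ := ST (G5.CKN Set.univ q0) (G6.CKN Set.univ a0) σ with hτdef
  set s' : S6 := step6 a0 (τ () a0) with hs'def
  have hs' : s' ∈ G6.succ Set.univ τ a0 :=
    ⟨fun _ => τ () a0, fun i _ => by cases i; rfl, rfl⟩
  -- apply back-transfer at (q0, a0)
  have hq0ck : q0 ∈ G5.CKN Set.univ q0 := Relation.ReflTransGen.refl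
  have hq1ck : q1 ∈ G5.CKN Set.univ q0 := (ck5_iff _ _).mpr rfl
  have ha0ck : a0 ∈ G6.CKN Set.univ a0 := Relation.ReflTransGen.refl
  obtain ⟨s2, hs2succ, hRs2⟩ :=
    (hST q0 a0 hR00).2 q0 hq0ck a0 ha0ck hR00 σ hσ s' hs'
  -- apply back-transfer at (q1, a0); note CKN q1 = CKN q0
  have hST1 := (hST q1 a0 hRq1).2 q1 (by rw [← CKN5_eq]; exact hq1ck) a0
    ha0ck hRq1 σ (by rw [← CKN5_eq]; exact hσ)
  rw [← CKN5_eq] at hST1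
  obtain ⟨s3, hs3succ, hRs3⟩ := hST1 s' hs'
  -- compute successors
  have hs2 : s2 = q2 := by
    obtain ⟨a, ha, ht⟩ := hs2succ
    have : a () = true := ha () (Set.mem_univ _)
    rw [ht, this]; rfl
  have hs3 : s3 = q3 := by
    obtain ⟨a, ha, ht⟩ := hs3succ
    have : a () = true := ha () (Set.mem_univ _)
    rw [ht, this]; rfl
  subst hs2; subst hs3
  have h2 := hlab q2 s' hRs2
  have h3 := hlab q3 s' hRs3
  have : (() : Unit) ∈ G5.label q2 := rfl
  rw [h2, ← h3] at this
  exact absurd this (by simp [G5])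

end HM8

/-- failure of the Hennessy–Milner property under the objective
semantics: there are finite single-agent iCGS and states satisfying exactly the
same `Ag`-formulas of ATL* (objective imperfect-information memoryless
semantics) that are not related by any `Ag`-bisimulation. -/
theorem hennessy_milner_fails_objective :
    ∃ (S₅ S₆ Act₅ Act₆ : Type) (_ : Fintype S₅) (_ : Fintype S₆)
      (_ : Fintype Act₅) (_ : Fintype Act₆)
      (G₅ : iCGS Unit Unit S₅ Act₅) (G₆ : iCGS Unit Unit S₆ Act₆)
      (q₀ : S₅) (q₀' : S₆),
      G₅.Valid ∧ G₆.Valid ∧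
      (∀ φ : SF Unit Unit, SOnly Set.univ φ →
        (SSat G₅ false q₀ φ ↔ SSat G₆ false q₀' φ)) ∧
      ¬ ∃ R, G₅.IsBisimulation G₆ Set.univ R ∧ R q₀ q₀' := by
  exact ⟨HM8.S5, HM8.S6, Bool, Bool, inferInstance, inferInstance, inferInstance,
    inferInstance, HM8.G5, HM8.G6, HM8.S5.q0, HM8.S6.a0, HM8.G5_valid, HM8.G6_valid,
    fun φ _ => HM8.sEquiv HM8.S5.q0 (by intro h; cases h) φ, HM8.no_bisim⟩
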